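/- Let G = (V,E;w) be a finite simple undirected graph with positive vertex weights and let α ≥ 0. In the network N(G,α): (i) for every B ⊆ V, the s–t cut whose source side is S = {s} ∪ B ∪ {ũ : u ∈ Γ(B)} has finite capacity equal to α·(w(V) − w(B)) + w(Γ(B)); (ii) every s–t cut (S,T) of finite capacity satisfies {ũ : u ∈ Γ(S ∩ V)} ⊆ S and cap(S,T) ≥ α·(w(V) − w(S∩V)) + w(Γ(S∩V)). Consequently, the minimum s–t cut capacity of N(G,α) equals the minimum over B ⊆ V of α·(w(V) − w(B)) + w(Γ(B)). -/

import Mathlib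

open Finset
open scoped ENNReal

/-- The total weight of a finite set of vertices. -/
def wsum {V : Type*} (w : V → ℝ) (S : Finset V) : ℝ := ∑ v ∈ S, w v

/-- The neighborhood `Γ(S)` of a set `S` of vertices. -/
def nbhd {V : Type*} [Fintype V] [DecidableEq V] (G : SimpleGraph V) [DecidableRel G.Adj]
    (S : Finset V) : Finset V :=
  univ.filter fun v => ∃ u ∈ S, G.Adj u v

/-- The vertex set of the network `N(G,α)`: the source `Sum.inl none`, the sink
`Sum.inr none`, a left copy `Sum.inl (some v)` of each vertex `v ∈ V`, and a right copy
`Sum.inr (some v)` (written `ṽ`) of each vertex `v ∈ V`. -/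
abbrev NetV (V : Type*) := Option V ⊕ Option V

/-- The source `s` of the network `N(G,α)`. -/
def netSrc (V : Type*) : NetV V := Sum.inl none

/-- The sink `t` of the network `N(G,α)`. -/
def netSnk (V : Type*) : NetV V := Sum.inr none

/-- Edge capacities of the network `N(G,α)`: `(s, v)` has capacity `α·w(v)`, `(ṽ, t)` has
capacity `w(v)`, and `(u, ṽ)` has capacity `+∞` whenever `(u,v) ∈ E`; all other pairs have
capacity `0` (no edge). -/
noncomputable def netCap {V : Type*} (G : SimpleGraph V) [DecidableRel G.Adj]
    (w : V → ℝ) (a : ℝ) : NetV V → NetV V → ℝ≥0∞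
  | Sum.inl none, Sum.inl (some v) => ENNReal.ofReal (a * w v)
  | Sum.inr (some v), Sum.inr none => ENNReal.ofReal (w v)
  | Sum.inl (some u), Sum.inr (some v) => if G.Adj u v then ⊤ else 0
  | _, _ => 0

/-- The capacity of the s–t cut `(S, Sᶜ)`: the sum of the capacities of all directed edges
with tail in `S` and head outside `S`. -/
noncomputable def cutCap {V : Type*} [Fintype V] [DecidableEq V] (G : SimpleGraph V)
    [DecidableRel G.Adj] (w : V → ℝ) (a : ℝ) (S : Finset (NetV V)) : ℝ≥0∞ :=
  ∑ x ∈ S, ∑ y ∈ Sᶜ, netCap G w a x y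

/-- The source side `{s} ∪ B ∪ {ũ : u ∈ Γ(B)}` of the cut corresponding to `B ⊆ V`. -/
def cutSide {V : Type*} [Fintype V] [DecidableEq V] (G : SimpleGraph V)
    [DecidableRel G.Adj] (B : Finset V) : Finset (NetV V) :=
  {netSrc V} ∪ B.image (fun v => Sum.inl (some v)) ∪
    (nbhd G B).image (fun v => Sum.inr (some v))

/-- The set `S ∩ V` of left-copy vertices of a cut side `S`: the corresponding set of the
cut. -/
def leftPart {V : Type*} [Fintype V] [DecidableEq V] (S : Finset (NetV V)) : Finset V :=
  univ.filter fun v => Sum.inl (some v) ∈ S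


section Aux
set_option linter.unusedSectionVars false
variable {V : Type*} [Fintype V] [DecidableEq V] (G : SimpleGraph V) [DecidableRel G.Adj]
  (w : V → ℝ) (a : ℝ)

def rightPart {V : Type*} [Fintype V] [DecidableEq V] (S : Finset (NetV V)) : Finset V :=
  univ.filter fun v => Sum.inr (some v) ∈ S
lemma cutCap_eq (S : Finset (NetV V)) (hs : netSrc V ∈ S) (ht : netSnk V ∉ S) :
    cutCap G w a S =
      (∑ v ∈ (leftPart S)ᶜ, ENNReal.ofReal (a * w v))
      + (∑ u ∈ leftPart S, ∑ v ∈ (rightPart S)ᶜ, (if G.Adj u v then (⊤:ℝ≥0∞) else 0))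
      + (∑ v ∈ rightPart S, ENNReal.ofReal (w v)) := by
  have key : ∀ T : Finset (NetV V), ∀ f : NetV V → ℝ≥0∞,
      ∑ y ∈ T, f y = ∑ y : NetV V, if y ∈ T then f y else 0 := by
    intro T f
    rw [Finset.sum_ite_mem, Finset.univ_inter]
  rw [netSrc] at hs; rw [netSnk] at ht
  rw [cutCap, key S]
  simp only [key Sᶜ, Finset.mem_compl]
  rw [Fintype.sum_sum_type, Fintype.sum_option, Fintype.sum_option]
  simp only [Fintype.sum_sum_type, Fintype.sum_option, netCap, hs, if_true, ht, if_false,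
    ite_self, Finset.sum_const_zero, zero_add, add_zero, not_true, not_false_iff]
  rw [leftPart, rightPart, Finset.compl_filter, Finset.compl_filter]
  simp only [Finset.sum_filter]

lemma leftPart_cutSide (B : Finset V) : leftPart (cutSide G B) = B := by
  ext v
  simp [leftPart, cutSide, netSrc]

lemma rightPart_cutSide (B : Finset V) : rightPart (cutSide G B) = nbhd G B := by
  ext v
  simp [rightPart, cutSide, netSrc]

lemma src_mem_cutSide (B : Finset V) : netSrc V ∈ cutSide G B := by
  simp [cutSide]

lemma snk_not_mem_cutSide (B : Finset V) : netSnk V ∉ cutSide G B := by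
  simp [cutSide, netSnk, netSrc]

lemma wsum_nonneg (hw : ∀ v, 0 < w v) (T : Finset V) : 0 ≤ wsum w T :=
  Finset.sum_nonneg fun v _ => (hw v).le

lemma wsum_le (hw : ∀ v, 0 < w v) (T : Finset V) : wsum w T ≤ wsum w univ :=
  Finset.sum_le_sum_of_subset_of_nonneg (Finset.subset_univ T) (fun v _ _ => (hw v).le)

lemma ofReal_sum_compl (hw : ∀ v, 0 < w v) (ha : 0 ≤ a) (B : Finset V) :
    ∑ v ∈ Bᶜ, ENNReal.ofReal (a * w v) = ENNReal.ofReal (a * (wsum w univ - wsum w B)) := by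
  rw [← ENNReal.ofReal_sum_of_nonneg (fun v _ => mul_nonneg ha (hw v).le)]
  congr 1
  rw [← Finset.mul_sum]
  congr 1
  have := Finset.sum_compl_add_sum B w
  rw [wsum, wsum]
  linarith

lemma ofReal_wsum (T : Finset V) (hw : ∀ v, 0 < w v) :
    ∑ v ∈ T, ENNReal.ofReal (w v) = ENNReal.ofReal (wsum w T) := by
  rw [← ENNReal.ofReal_sum_of_nonneg (fun v _ => (hw v).le)]
  rfl

lemma part_i (hw : ∀ v, 0 < w v) (ha : 0 ≤ a) (B : Finset V) :
    cutCap G w a (cutSide G B) =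
      ENNReal.ofReal (a * (wsum w univ - wsum w B) + wsum w (nbhd G B)) := by
  rw [cutCap_eq G w a _ (src_mem_cutSide G B) (snk_not_mem_cutSide G B),
    leftPart_cutSide, rightPart_cutSide]
  have hmid : (∑ u ∈ B, ∑ v ∈ (nbhd G B)ᶜ, (if G.Adj u v then (⊤:ℝ≥0∞) else 0)) = 0 := by
    refine Finset.sum_eq_zero fun u hu => Finset.sum_eq_zero fun v hv => ?_
    rw [if_neg]
    intro hadj
    exact (Finset.mem_compl.mp hv) (Finset.mem_filter.mpr ⟨Finset.mem_univ v, u, hu, hadj⟩)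
  rw [hmid, add_zero, ofReal_sum_compl w a hw ha, ofReal_wsum w _ hw,
    ENNReal.ofReal_add (mul_nonneg ha (by linarith [wsum_le w hw B])) (wsum_nonneg w hw _)]

set_option linter.unusedSectionVars false

lemma nbhd_sub (S : Finset (NetV V)) (hfin : cutCap G w a S ≠ ⊤) :
    ∀ u ∈ nbhd G (leftPart S), (Sum.inr (some u) : NetV V) ∈ S := by
  intro u hu
  by_contra h
  obtain ⟨-, x, hx, hadj⟩ := Finset.mem_filter.mp hu
  have hxS : (Sum.inl (some x) : NetV V) ∈ S := (Finset.mem_filter.mp hx).2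
  have h2 : netCap G w a (Sum.inl (some x)) (Sum.inr (some u)) ≤
      ∑ y ∈ Sᶜ, netCap G w a (Sum.inl (some x)) y :=
    Finset.single_le_sum (fun _ _ => zero_le) (Finset.mem_compl.mpr h)
  have h1 : (∑ y ∈ Sᶜ, netCap G w a (Sum.inl (some x)) y) ≤ cutCap G w a S :=
    Finset.single_le_sum (f := fun x => ∑ y ∈ Sᶜ, netCap G w a x y)
      (fun _ _ => zero_le) hxS
  apply hfin
  have : netCap G w a (Sum.inl (some x)) (Sum.inr (some u)) = ⊤ := by
    simp [netCap, hadj]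
  exact top_le_iff.mp (this ▸ h2.trans h1)

lemma part_ii (hw : ∀ v, 0 < w v) (ha : 0 ≤ a) (S : Finset (NetV V))
    (hs : netSrc V ∈ S) (ht : netSnk V ∉ S) (hfin : cutCap G w a S ≠ ⊤) :
    ENNReal.ofReal (a * (wsum w univ - wsum w (leftPart S)) + wsum w (nbhd G (leftPart S)))
      ≤ cutCap G w a S := by
  rw [cutCap_eq G w a S hs ht]
  have hsub : nbhd G (leftPart S) ⊆ rightPart S := fun u hu =>
    Finset.mem_filter.mpr ⟨Finset.mem_univ u, nbhd_sub G w a S hfin u hu⟩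
  have hC : (ENNReal.ofReal (wsum w (nbhd G (leftPart S)))) ≤
      ∑ v ∈ rightPart S, ENNReal.ofReal (w v) := by
    rw [← ofReal_wsum w _ hw]
    exact Finset.sum_le_sum_of_subset hsub
  rw [ENNReal.ofReal_add (mul_nonneg ha (by linarith [wsum_le w hw (leftPart S)]))
    (wsum_nonneg w hw _), ← ofReal_sum_compl w a hw ha (leftPart S)]
  calc _ ≤ (∑ v ∈ (leftPart S)ᶜ, ENNReal.ofReal (a * w v)) +
        ∑ v ∈ rightPart S, ENNReal.ofReal (w v) := add_le_add le_rfl hC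
    _ ≤ _ := by
        rw [add_assoc, add_comm (∑ u ∈ leftPart S, _) _, ← add_assoc]
        exact le_add_right le_rfl

theorem network_cut_char_aux (hw : ∀ v, 0 < w v) (ha : 0 ≤ a) :
    (∀ B : Finset V,
        cutCap G w a (cutSide G B) =
          ENNReal.ofReal (a * (wsum w univ - wsum w B) + wsum w (nbhd G B))) ∧
    (∀ S : Finset (NetV V), netSrc V ∈ S → netSnk V ∉ S → cutCap G w a S ≠ ⊤ →
        (∀ u ∈ nbhd G (leftPart S), (Sum.inr (some u) : NetV V) ∈ S) ∧
        ENNReal.ofReal (a * (wsum w univ - wsum w (leftPart S)) + wsum w (nbhd G (leftPart S)))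
          ≤ cutCap G w a S) ∧
    (⨅ S ∈ {S : Finset (NetV V) | netSrc V ∈ S ∧ netSnk V ∉ S}, cutCap G w a S) =
      ⨅ B : Finset V, ENNReal.ofReal (a * (wsum w univ - wsum w B) + wsum w (nbhd G B)) := by
  refine ⟨part_i G w a hw ha, fun S hs ht hfin =>
    ⟨nbhd_sub G w a S hfin, part_ii G w a hw ha S hs ht hfin⟩, le_antisymm ?_ ?_⟩
  · refine le_iInf fun B => ?_
    have hmem : cutSide G B ∈ {S : Finset (NetV V) | netSrc V ∈ S ∧ netSnk V ∉ S} :=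
      ⟨src_mem_cutSide G B, snk_not_mem_cutSide G B⟩
    have h := iInf₂_le (f := fun (S : Finset (NetV V)) (_ : S ∈ {S : Finset (NetV V) | netSrc V ∈ S ∧ netSnk V ∉ S}) => cutCap G w a S) (cutSide G B) hmem
    rw [part_i G w a hw ha B] at h
    exact h
  · refine le_iInf₂ fun S hS => ?_
    by_cases hfin : cutCap G w a S = ⊤
    · rw [hfin]; exact le_top
    · exact (iInf_le _ (leftPart S)).trans (part_ii G w a hw ha S hS.1 hS.2 hfin)
end Aux

/-- (i) for every `B ⊆ V` the cut with source side `{s} ∪ B ∪ Γ(B)~` has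
finite capacity `α·(w(V) − w(B)) + w(Γ(B))`; (ii) every finite-capacity s–t cut `(S,T)`
satisfies `Γ(S ∩ V)~ ⊆ S` and has capacity at least `α·(w(V)−w(S∩V)) + w(Γ(S∩V))`;
consequently the minimum cut capacity of `N(G,α)` equals
`min_{B ⊆ V} α·(w(V)−w(B)) + w(Γ(B))`. -/
theorem network_cut_characterization {V : Type*} [Fintype V] [DecidableEq V]
    (G : SimpleGraph V) [DecidableRel G.Adj] (w : V → ℝ) (a : ℝ)
    (hw : ∀ v, 0 < w v) (ha : 0 ≤ a) :
    (∀ B : Finset V,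
        cutCap G w a (cutSide G B) =
          ENNReal.ofReal (a * (wsum w univ - wsum w B) + wsum w (nbhd G B))) ∧
    (∀ S : Finset (NetV V), netSrc V ∈ S → netSnk V ∉ S → cutCap G w a S ≠ ⊤ →
        (∀ u ∈ nbhd G (leftPart S), (Sum.inr (some u) : NetV V) ∈ S) ∧
        ENNReal.ofReal (a * (wsum w univ - wsum w (leftPart S)) + wsum w (nbhd G (leftPart S)))
          ≤ cutCap G w a S) ∧
    (⨅ S ∈ {S : Finset (NetV V) | netSrc V ∈ S ∧ netSnk V ∉ S}, cutCap G w a S) =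
      ⨅ B : Finset V, ENNReal.ofReal (a * (wsum w univ - wsum w B) + wsum w (nbhd G B)) := by
  exact network_cut_char_aux G w a hw ha
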